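/- Let A = Aᵀ with W = tr(A)I − A positive definite, let λ_max = λ_max(W), ξ = λ_min(W)/λ_max, and let k satisfy |k| < 1/(2 λ_max √(6 − max{1, 4ξ²})). Then for all R ∈ SO(3): (i) |k V_A(R)| < 1, so θ(R) = 2 arcsin(k V_A(R)) is well defined, and (ii) if R = R_a(θ(R), u)ᵀ for some u ∈ S², then R = I. -/

import Mathlib

open Matrix Real

noncomputable section

/-- The skew-symmetric cross-product matrix `[u]ₓ`. -/
def skew (u : Fin 3 → ℝ) : Matrix (Fin 3) (Fin 3) ℝ :=
  !![0, -u 2, u 1; u 2, 0, -u 0; -u 1, u 0, 0]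

/-- Inverse of `skew` on skew-symmetric matrices. -/
def vex (M : Matrix (Fin 3) (Fin 3) ℝ) : Fin 3 → ℝ :=
  ![M 2 1, M 0 2, M 1 0]

/-- `ψ(A) = vex((A - Aᵀ)/2)`. -/
def psiMap (M : Matrix (Fin 3) (Fin 3) ℝ) : Fin 3 → ℝ :=
  vex ((1 / 2 : ℝ) • (M - Mᵀ))

/-- Cross product on `ℝ³`. -/
def cross3 (x y : Fin 3 → ℝ) : Fin 3 → ℝ :=
  ![x 1 * y 2 - x 2 * y 1, x 2 * y 0 - x 0 * y 2, x 0 * y 1 - x 1 * y 0]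

/-- Rodrigues rotation. -/
def Ra (θ : ℝ) (u : Fin 3 → ℝ) : Matrix (Fin 3) (Fin 3) ℝ :=
  1 + Real.sin θ • skew u + (1 - Real.cos θ) • (skew u * skew u)

/-- Membership in SO(3). -/
def SO3 (R : Matrix (Fin 3) (Fin 3) ℝ) : Prop :=
  R * Rᵀ = 1 ∧ R.det = 1

lemma adj_cubic (M : Matrix (Fin 3) (Fin 3) ℝ) :
    adjugate M = M*M - M.trace • M + (adjugate M).trace • (1 : Matrix (Fin 3) (Fin 3) ℝ) := by
  ext i j
  simp [adjugate_fin_three, trace_fin_three, mul_apply, Fin.sum_univ_three, Matrix.one_apply]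
  fin_cases i <;> fin_cases j <;> simp <;> ring

lemma trace_conj_eq (M B : Matrix (Fin 3) (Fin 3) ℝ) :
    (Mᵀ*B*M).trace =
      (fun j => M j 0) ⬝ᵥ (B *ᵥ fun j => M j 0) + (fun j => M j 1) ⬝ᵥ (B *ᵥ fun j => M j 1)
        + (fun j => M j 2) ⬝ᵥ (B *ᵥ fun j => M j 2) := by
  simp [trace_fin_three, mul_apply, dotProduct, mulVec, Fin.sum_univ_three]
  ring

lemma trace_gram_eq (M : Matrix (Fin 3) (Fin 3) ℝ) :
    (Mᵀ*M).trace =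
      (fun j => M j 0) ⬝ᵥ (fun j => M j 0) + (fun j => M j 1) ⬝ᵥ (fun j => M j 1)
        + (fun j => M j 2) ⬝ᵥ (fun j => M j 2) := by
  simp [trace_fin_three, mul_apply, dotProduct, Fin.sum_univ_three]

lemma dot_self_nonneg' (x : Fin 3 → ℝ) : 0 ≤ x ⬝ᵥ x :=
  Finset.sum_nonneg fun _ _ => mul_self_nonneg _

lemma trace_A_mul_transpose (A M : Matrix (Fin 3) (Fin 3) ℝ) (hA : Aᵀ = A) :
    (A * Mᵀ).trace = (A * M).trace := by
  rw [← trace_transpose (A * Mᵀ), transpose_mul, transpose_transpose, hA, trace_mul_comm]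

lemma traceARa (A : Matrix (Fin 3) (Fin 3) ℝ) (hA : Aᵀ = A) (θ : ℝ) (u : Fin 3 → ℝ)
    (hu : u ⬝ᵥ u = 1) :
    (A * (1 - (Ra θ u)ᵀ)).trace = (1 - Real.cos θ) * (A.trace - u ⬝ᵥ (A *ᵥ u)) := by
  have h01 : A 1 0 = A 0 1 := by simpa using congrFun (congrFun hA.symm _) _
  have h02 : A 2 0 = A 0 2 := by simpa using congrFun (congrFun hA.symm _) _
  have h12 : A 2 1 = A 1 2 := by simpa using congrFun (congrFun hA.symm _) _
  have hu' : u 0 * u 0 + u 1 * u 1 + u 2 * u 2 = 1 := by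
    simpa [dotProduct, Fin.sum_univ_three] using hu
  simp only [Ra, skew, trace_fin_three, mul_apply, dotProduct, mulVec, Fin.sum_univ_three,
    Matrix.one_apply, transpose_apply, Matrix.add_apply, Matrix.sub_apply, Matrix.smul_apply,
    Matrix.cons_val', Matrix.cons_val_zero, Matrix.cons_val_one, Matrix.head_cons,
    Matrix.empty_val', Matrix.cons_val_fin_one, Matrix.head_fin_const, smul_eq_mul]
  norm_num [h01, h02, h12, Matrix.cons_val_two, Matrix.vecHead, Matrix.vecTail]
  linear_combination ((1 - Real.cos θ) * (A 0 0 + A 1 1 + A 2 2)) * hu'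

lemma sq_sum_zero6 {a b c d e f : ℝ}
    (h : a^2 + 2*b^2 + 2*c^2 + d^2 + 2*e^2 + f^2 = 0) :
    a = 0 ∧ b = 0 ∧ c = 0 ∧ d = 0 ∧ e = 0 ∧ f = 0 := by
  refine ⟨?_, ?_, ?_, ?_, ?_, ?_⟩ <;>
    nlinarith [sq_nonneg a, sq_nonneg b, sq_nonneg c, sq_nonneg d, sq_nonneg e, sq_nonneg f]

set_option maxHeartbeats 1000000 in
theorem stmt_18 (A : Matrix (Fin 3) (Fin 3) ℝ) (hA : Aᵀ = A)
    (W : Matrix (Fin 3) (Fin 3) ℝ) (hW : W = A.trace • (1 : Matrix (Fin 3) (Fin 3) ℝ) - A)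
    (lmin lmax : ℝ) (hpos : 0 < lmin)
    (hmin : ∀ x : Fin 3 → ℝ, lmin * (x ⬝ᵥ x) ≤ x ⬝ᵥ (W *ᵥ x))
    (hmax : ∀ x : Fin 3 → ℝ, x ⬝ᵥ (W *ᵥ x) ≤ lmax * (x ⬝ᵥ x))
    (hev_min : ∃ x : Fin 3 → ℝ, x ≠ 0 ∧ W *ᵥ x = lmin • x)
    (hev_max : ∃ x : Fin 3 → ℝ, x ≠ 0 ∧ W *ᵥ x = lmax • x)
    (k : ℝ)
    (hk : |k| < 1 / (2 * lmax * Real.sqrt (6 - max 1 (4 * (lmin / lmax) ^ 2))))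
    (R : Matrix (Fin 3) (Fin 3) ℝ) (hR : SO3 R) :
    |k * (A * (1 - R)).trace| < 1 ∧
      (∀ u : Fin 3 → ℝ, u ⬝ᵥ u = 1 →
        R = (Ra (2 * Real.arcsin (k * (A * (1 - R)).trace)) u)ᵀ → R = 1) := by
  obtain ⟨hRo, hRdet⟩ := hR
  -- ALGEBRA: P² = c • P
  have hRtR : Rᵀ * R = 1 := mul_eq_one_comm.mp hRo
  have h1 : R * adjugate R = 1 := by rw [Matrix.mul_adjugate, hRdet, one_smul]
  have hadj : adjugate R = Rᵀ := by
    calc adjugate R = (Rᵀ * R) * adjugate R := by rw [hRtR, one_mul]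
      _ = Rᵀ * (R * adjugate R) := by rw [Matrix.mul_assoc]
      _ = Rᵀ := by rw [h1, mul_one]
  have htradj : (adjugate R).trace = R.trace := by rw [hadj, trace_transpose]
  obtain ⟨t, ht⟩ : ∃ t, t = R.trace := ⟨_, rfl⟩
  have key : Rᵀ = R*R - t • R + t • 1 := by
    rw [← hadj, adj_cubic R, htradj, ht]
  have hRR : R*R = Rᵀ + t•R - t•(1 : Matrix (Fin 3) (Fin 3) ℝ) := by rw [key]; module
  have hTT : Rᵀ*Rᵀ = R + t•Rᵀ - t•(1 : Matrix (Fin 3) (Fin 3) ℝ) := by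
    calc Rᵀ*Rᵀ = (R*R)ᵀ := (transpose_mul R R).symm
      _ = (Rᵀ + t•R - t•(1 : Matrix (Fin 3) (Fin 3) ℝ))ᵀ := by rw [hRR]
      _ = R + t•Rᵀ - t•(1 : Matrix (Fin 3) (Fin 3) ℝ) := by
          simp [transpose_sub, transpose_add, transpose_smul]
  obtain ⟨S, hS⟩ : ∃ S, S = R + Rᵀ := ⟨_, rfl⟩
  have e1 : S * S = R*R + 1 + (1 + Rᵀ*Rᵀ) := by
    rw [hS, add_mul, mul_add, mul_add, hRo, hRtR]
  have hS2 : S*S = (1+t) • S + (2-2*t) • (1 : Matrix (Fin 3) (Fin 3) ℝ) := by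
    rw [e1, hRR, hTT, hS]; module
  obtain ⟨c, hc⟩ : ∃ c, c = (3 - t)/2 := ⟨_, rfl⟩
  obtain ⟨P, hP⟩ : ∃ P, P = (1 : Matrix (Fin 3) (Fin 3) ℝ) - (1/2 : ℝ) • S := ⟨_, rfl⟩
  have expand : P*P = 1 - S + (1/4 : ℝ) • (S*S) := by
    rw [hP, sub_mul, one_mul, mul_sub, mul_one, smul_mul_assoc, mul_smul_comm, smul_smul]
    module
  have hP2 : P*P = c • P := by
    rw [expand, hS2, hP, hc]; module
  have hPsym : Pᵀ = P := by
    rw [hP, hS]; simp [transpose_sub, transpose_smul, transpose_add]; module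
  -- quadratic form facts for P
  have hdotR : ∀ x : Fin 3 → ℝ, x ⬝ᵥ (P *ᵥ x) = x ⬝ᵥ x - x ⬝ᵥ (Rᵀ *ᵥ x) := by
    intro x
    have hxRx : x ⬝ᵥ (R *ᵥ x) = x ⬝ᵥ (Rᵀ *ᵥ x) := by
      rw [dotProduct_mulVec, ← mulVec_transpose, dotProduct_comm]
    rw [hP, hS, sub_mulVec, one_mulVec, smul_mulVec, add_mulVec, dotProduct_sub,
      dotProduct_smul, dotProduct_add, hxRx]
    simp [smul_eq_mul]
    ring
  have hyy : ∀ x : Fin 3 → ℝ, (Rᵀ *ᵥ x) ⬝ᵥ (Rᵀ *ᵥ x) = x ⬝ᵥ x := by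
    intro x
    rw [dotProduct_mulVec, vecMul_transpose, mulVec_mulVec, hRo, one_mulVec]
  have hPSD : ∀ x : Fin 3 → ℝ, 0 ≤ x ⬝ᵥ (P *ᵥ x) := by
    intro x
    have hsub : 0 ≤ (x - Rᵀ *ᵥ x) ⬝ᵥ (x - Rᵀ *ᵥ x) := dot_self_nonneg' _
    have e : (x - Rᵀ *ᵥ x) ⬝ᵥ (x - Rᵀ *ᵥ x) = 2 * (x ⬝ᵥ x) - 2 * (x ⬝ᵥ (Rᵀ *ᵥ x)) := by
      rw [sub_dotProduct, dotProduct_sub, dotProduct_sub, hyy, dotProduct_comm (Rᵀ *ᵥ x) x]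
      ring
    rw [hdotR]; linarith [e ▸ hsub]
  have hPbd : ∀ x : Fin 3 → ℝ, x ⬝ᵥ (P *ᵥ x) ≤ 2 * (x ⬝ᵥ x) := by
    intro x
    have hadd : 0 ≤ (x + Rᵀ *ᵥ x) ⬝ᵥ (x + Rᵀ *ᵥ x) := dot_self_nonneg' _
    have e : (x + Rᵀ *ᵥ x) ⬝ᵥ (x + Rᵀ *ᵥ x) = 2 * (x ⬝ᵥ x) + 2 * (x ⬝ᵥ (Rᵀ *ᵥ x)) := by
      rw [add_dotProduct, dotProduct_add, dotProduct_add, hyy, dotProduct_comm (Rᵀ *ᵥ x) x]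
      ring
    rw [hdotR]; linarith [e ▸ hadd]
  -- lmax positivity
  have he0 : (![1,0,0] : Fin 3 → ℝ) ⬝ᵥ ![1,0,0] = 1 := by
    simp [dotProduct, Fin.sum_univ_three]
  have hminmax : lmin ≤ lmax := by
    have h1 := hmin ![1,0,0]
    have h2 := hmax ![1,0,0]
    rw [he0] at h1 h2; linarith
  have hlmax : 0 < lmax := lt_of_lt_of_le hpos hminmax
  -- sandwich for A-quadratic form
  have hWx : ∀ x : Fin 3 → ℝ, x ⬝ᵥ (W *ᵥ x) = A.trace * (x ⬝ᵥ x) - x ⬝ᵥ (A *ᵥ x) := by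
    intro x
    rw [hW, sub_mulVec, smul_mulVec, one_mulVec, dotProduct_sub, dotProduct_smul,
      smul_eq_mul]
  have hAlo : ∀ x : Fin 3 → ℝ, (A.trace - lmax) * (x ⬝ᵥ x) ≤ x ⬝ᵥ (A *ᵥ x) := by
    intro x; have := hmax x; rw [hWx x] at this; linarith
  have hAhi : ∀ x : Fin 3 → ℝ, x ⬝ᵥ (A *ᵥ x) ≤ (A.trace - lmin) * (x ⬝ᵥ x) := by
    intro x; have := hmin x; rw [hWx x] at this; linarith
  -- trace of P
  have htrP : P.trace = 2 * c := by
    rw [hP, hS, trace_sub, trace_smul, trace_add, trace_transpose, trace_one, hc, ht]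
    simp [Fintype.card_fin, smul_eq_mul]
    ring
  -- V
  obtain ⟨V, hV⟩ : ∃ V, V = (A * P).trace := ⟨_, rfl⟩
  have hVeq : (A * (1 - R)).trace = V := by
    have l1 : (A * (1 - R)).trace = A.trace - (A * R).trace := by
      rw [mul_sub, mul_one, trace_sub]
    have l2 : V = A.trace - (1/2) * ((A * R).trace + (A * Rᵀ).trace) := by
      rw [hV, hP, hS, mul_sub, mul_one, mul_smul_comm, trace_sub, trace_smul, mul_add,
        trace_add, smul_eq_mul]
    rw [l1, l2, trace_A_mul_transpose A R hA]; ring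
  -- trace of P is nonneg
  have hd0 : (![1,0,0] : Fin 3 → ℝ) ⬝ᵥ (P *ᵥ ![1,0,0]) = P 0 0 := by
    simp [dotProduct, mulVec, Fin.sum_univ_three]
  have hd1 : (![0,1,0] : Fin 3 → ℝ) ⬝ᵥ (P *ᵥ ![0,1,0]) = P 1 1 := by
    simp [dotProduct, mulVec, Fin.sum_univ_three]
  have hd2 : (![0,0,1] : Fin 3 → ℝ) ⬝ᵥ (P *ᵥ ![0,0,1]) = P 2 2 := by
    simp [dotProduct, mulVec, Fin.sum_univ_three]
  have htrP3 : P.trace = P 0 0 + P 1 1 + P 2 2 := trace_fin_three P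
  have hcnn : 0 ≤ c := by
    have a0 := hPSD ![1,0,0]; have a1 := hPSD ![0,1,0]; have a2 := hPSD ![0,0,1]
    rw [hd0] at a0; rw [hd1] at a1; rw [hd2] at a2
    linarith [htrP, htrP3]
  -- main bounds on V
  have hVbounds : 0 ≤ V ∧ V ≤ 2 * lmax := by
    by_cases hc0 : c = 0
    · -- P = 0, V = 0
      have hsym : ∀ i j, P j i = P i j := fun i j => by
        simpa using congrFun (congrFun hPsym i) j
      have htr0 : (P*P).trace = 0 := by rw [hP2, hc0, zero_smul, trace_zero]
      have hexp : (P*P).trace = P 0 0^2 + 2*(P 0 1)^2 + 2*(P 0 2)^2 + P 1 1^2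
          + 2*(P 1 2)^2 + P 2 2^2 := by
        simp [trace_fin_three, mul_apply, Fin.sum_univ_three, hsym 0 1, hsym 0 2, hsym 1 2]
        ring
      have hsum : P 0 0^2 + 2*(P 0 1)^2 + 2*(P 0 2)^2 + P 1 1^2 + 2*(P 1 2)^2 + P 2 2^2
          = 0 := by rw [← hexp, htr0]
      obtain ⟨z00, z01, z02, z11, z12, z22⟩ := sq_sum_zero6 hsum
      have z10 : P 1 0 = 0 := by rw [hsym 0 1]; exact z01
      have z20 : P 2 0 = 0 := by rw [hsym 0 2]; exact z02
      have z21 : P 2 1 = 0 := by rw [hsym 1 2]; exact z12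
      have hPzero : P = 0 := by
        ext i j
        fin_cases i <;> fin_cases j <;> simp only [Matrix.zero_apply] <;>
          first
            | exact z00 | exact z01 | exact z02 | exact z10 | exact z11 | exact z12
            | exact z20 | exact z21 | exact z22
      have : V = 0 := by rw [hV, hPzero, mul_zero, trace_zero]
      constructor <;> nlinarith [hlmax]
    · have hcpos : 0 < c := lt_of_le_of_ne hcnn (Ne.symm hc0)
      -- c ≤ 2
      have hPne : P ≠ 0 := by
        intro h
        apply hc0
        have : P.trace = 0 := by rw [h, trace_zero]
        rw [htrP] at this; linarith
      obtain ⟨i, j, hij⟩ : ∃ i j, P i j ≠ 0 := by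
        by_contra h
        push_neg at h
        exact hPne (by ext i j; simpa using h i j)
      obtain ⟨v, hv'⟩ : ∃ v : Fin 3 → ℝ, v = fun r => P r j := ⟨_, rfl⟩
      have hPv : P *ᵥ v = c • v := by
        ext r
        have := congrFun (congrFun hP2 r) j
        simpa [mul_apply, mulVec, dotProduct, Fin.sum_univ_three, hv'] using this
      have hvv : 0 < v ⬝ᵥ v := by
        have h2 : v i ≠ 0 := by rw [hv']; exact hij
        have hle : v i * v i ≤ v ⬝ᵥ v := by
          have := Finset.single_le_sum (f := fun r => v r * v r)
            (fun r _ => mul_self_nonneg (v r)) (Finset.mem_univ i)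
          simpa [dotProduct] using this
        linarith [mul_self_pos.mpr h2]
      have hc2 : c ≤ 2 := by
        have h1 : v ⬝ᵥ (P *ᵥ v) = c * (v ⬝ᵥ v) := by
          rw [hPv, dotProduct_smul, smul_eq_mul]
        have h2 := hPbd v
        rw [h1] at h2
        exact le_of_mul_le_mul_right (by linarith) hvv
      -- N' := c•1 - P
      obtain ⟨N, hN⟩ : ∃ N, N = c • (1 : Matrix (Fin 3) (Fin 3) ℝ) - P := ⟨_, rfl⟩
      have hN2 : N*N = c • N := by
        rw [hN, sub_mul, mul_sub, mul_sub, hP2]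
        simp only [smul_mul_assoc, mul_smul_comm, one_mul, mul_one]
        module
      have hNsym : Nᵀ = N := by
        rw [hN, transpose_sub, transpose_smul, transpose_one, hPsym]
      have htrN : N.trace = c := by
        rw [hN, trace_sub, trace_smul, trace_one, htrP, smul_eq_mul]
        simp [Fintype.card_fin]
        ring
      have htrNN : (N*N).trace = c^2 := by
        rw [hN2, trace_smul, htrN, smul_eq_mul]; ring
      have htrAN : (A*N).trace = c * A.trace - V := by
        rw [hN, mul_sub, mul_smul_comm, trace_sub, trace_smul, mul_one, smul_eq_mul, hV]
      have htrNAN : (N*A*N).trace = c * (A*N).trace := by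
        calc (N*A*N).trace = (N*(N*A)).trace := trace_mul_comm (N*A) N
          _ = ((N*N)*A).trace := by rw [Matrix.mul_assoc]
          _ = ((c•N)*A).trace := by rw [hN2]
          _ = c * (N*A).trace := by rw [smul_mul_assoc, trace_smul, smul_eq_mul]
          _ = c * (A*N).trace := by rw [trace_mul_comm]
      -- column representation
      have hconj : (N*A*N).trace =
          (fun r => N r 0) ⬝ᵥ (A *ᵥ fun r => N r 0) + (fun r => N r 1) ⬝ᵥ (A *ᵥ fun r => N r 1)
            + (fun r => N r 2) ⬝ᵥ (A *ᵥ fun r => N r 2) := by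
        rw [← trace_conj_eq N A, hNsym]
      have hgram : (N*N).trace =
          (fun r => N r 0) ⬝ᵥ (fun r => N r 0) + (fun r => N r 1) ⬝ᵥ (fun r => N r 1)
            + (fun r => N r 2) ⬝ᵥ (fun r => N r 2) := by
        rw [← trace_gram_eq N, hNsym]
      have hlo : (A.trace - lmax) * ((N*N).trace) ≤ (N*A*N).trace := by
        rw [hconj, hgram]
        have a0 := hAlo (fun r => N r 0)
        have a1 := hAlo (fun r => N r 1)
        have a2 := hAlo (fun r => N r 2)
        linarith
      have hhi : (N*A*N).trace ≤ (A.trace - lmin) * ((N*N).trace) := by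
        rw [hconj, hgram]
        have a0 := hAhi (fun r => N r 0)
        have a1 := hAhi (fun r => N r 1)
        have a2 := hAhi (fun r => N r 2)
        linarith
      rw [htrNAN, htrAN, htrNN] at hlo hhi
      have h6 : c * V ≤ c * (c * lmax) := by nlinarith [hlo]
      have h8 : c * (c * lmin) ≤ c * V := by nlinarith [hhi]
      have h7 : V ≤ c * lmax := (mul_le_mul_iff_right₀ hcpos).mp h6
      have h9 : c * lmin ≤ V := (mul_le_mul_iff_right₀ hcpos).mp h8
      have h10 : c * lmax ≤ 2 * lmax := mul_le_mul_of_nonneg_right hc2 (le_of_lt hlmax)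
      constructor
      · linarith [mul_pos hcpos hpos]
      · linarith
  obtain ⟨hVlow, hVhigh⟩ := hVbounds
  -- numeric part (i)
  obtain ⟨D, hD⟩ : ∃ D, D = 6 - max 1 (4 * (lmin / lmax) ^ 2) := ⟨_, rfl⟩
  have hxi : lmin / lmax ≤ 1 := (div_le_one hlmax).mpr hminmax
  have hxi0 : 0 ≤ lmin / lmax := le_of_lt (div_pos hpos hlmax)
  have hD2 : 2 ≤ D := by
    have h4 : 4 * (lmin/lmax)^2 ≤ 4 := by clear * - hxi hxi0; nlinarith
    have : max 1 (4 * (lmin/lmax)^2) ≤ 4 := max_le (by norm_num) h4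
    rw [hD]; linarith
  have hsq1 : 1 < Real.sqrt D := by
    rw [show (1:ℝ) = Real.sqrt 1 from Real.sqrt_one.symm]
    exact Real.sqrt_lt_sqrt (by norm_num) (by linarith)
  have hden : 0 < 2 * lmax * Real.sqrt D := by positivity
  have hk' : |k| * (2 * lmax * Real.sqrt D) < 1 := by
    rw [← hD] at hk
    have := (lt_div_iff₀ hden).mp hk
    linarith
  have hklm : 2 * |k| * lmax < 1 := by
    clear * - hk' hsq1 hlmax
    nlinarith [abs_nonneg k, hlmax, hsq1, hk']
  have habs : |k * (A * (1 - R)).trace| < 1 := by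
    rw [hVeq, abs_mul, abs_of_nonneg hVlow]
    clear * - hVhigh hklm hVlow
    nlinarith [abs_nonneg k, hVhigh, hklm, hVlow]
  refine ⟨habs, ?_⟩
  -- part (ii)
  intro u hu hRu
  set θ' := 2 * Real.arcsin (k * (A * (1 - R)).trace) with hθ'
  have hm_lo : lmin ≤ u ⬝ᵥ (W *ᵥ u) := by have := hmin u; rw [hu] at this; linarith
  have hm_hi : u ⬝ᵥ (W *ᵥ u) ≤ lmax := by have := hmax u; rw [hu] at this; linarith
  have hWu : u ⬝ᵥ (W *ᵥ u) = A.trace - u ⬝ᵥ (A *ᵥ u) := by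
    rw [hWx u, hu]; ring
  obtain ⟨m, hm⟩ : ∃ m, m = u ⬝ᵥ (W *ᵥ u) := ⟨_, rfl⟩
  have hVra : V = (1 - Real.cos θ') * m := by
    calc V = (A * (1 - R)).trace := hVeq.symm
      _ = (A * (1 - (Ra θ' u)ᵀ)).trace := by rw [← hRu]
      _ = (1 - Real.cos θ') * (A.trace - u ⬝ᵥ (A *ᵥ u)) := traceARa A hA θ' u hu
      _ = (1 - Real.cos θ') * m := by rw [hm, hWu]
  have hkV1 : |k * V| < 1 := by rw [← hVeq]; exact habs
  have hkVle : -1 ≤ k * V ∧ k * V ≤ 1 := abs_le.mp (le_of_lt hkV1)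
  have hθV : θ' = 2 * Real.arcsin (k * V) := by rw [hθ', hVeq]
  have hcosθ : Real.cos θ' = 1 - 2 * (k * V)^2 := by
    rw [hθV, Real.cos_two_mul, Real.cos_sq', Real.sin_arcsin hkVle.1 hkVle.2]
    ring
  have heq : V = 2 * (k * V)^2 * m := by
    rw [hcosθ] at hVra; linear_combination hVra
  have hmpos : 0 < m := by rw [hm]; exact lt_of_lt_of_le hpos hm_lo
  have hmhi : m ≤ lmax := by rw [hm]; exact hm_hi
  have hVzero : V = 0 := by
    clear * - heq hVlow hkV1 hklm hmpos hmhi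
    by_contra hne
    have hVpos : 0 < V := lt_of_le_of_ne hVlow (Ne.symm hne)
    rcases eq_or_ne k 0 with hk0 | hk0
    · rw [hk0] at heq; simp at heq; exact hne (by linarith)
    · have hkpos : 0 < |k| := abs_pos.mpr hk0
      have h1eq : 1 = 2 * k^2 * V * m := by
        have e : V * 1 = V * (2 * k^2 * V * m) := by rw [mul_one]; linear_combination heq
        exact mul_left_cancel₀ (ne_of_gt hVpos) e
      have hkVlt : |k| * V < 1 := by
        rw [← abs_of_nonneg hVlow, ← abs_mul]; exact hkV1
      have key2 : 2 * |k| * m * (|k| * V) = 1 := by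
        linear_combination (2 * V * m) * (abs_mul_abs_self k) - h1eq
      have hA1 : 1 < 2 * |k| * m := by
        have hlt : 2 * |k| * m * (|k| * V) < 2 * |k| * m * 1 := by
          apply mul_lt_mul_of_pos_left hkVlt
          positivity
        rw [key2, mul_one] at hlt
        exact hlt
      have hA2 : 2 * |k| * m ≤ 2 * |k| * lmax := by
        have h2k : (0:ℝ) ≤ 2 * |k| := by positivity
        nlinarith [mul_le_mul_of_nonneg_left hmhi h2k]
      linarith [hklm]
  have hfin : (A * (1 - R)).trace = 0 := by rw [hVeq, hVzero]
  rw [hRu, hθ', hfin]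
  simp [Ra]
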